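/- Let f be a nonnegative simple function on a measure space X written as f = Σ_{n=1}^N a_n χ_{B_n} with a_n > 0 and B_1 ⊂ B_2 ⊂ ... ⊂ B_N measurable. If T is a sublinear operator (|T(Σ α_i f_i)(y)| ≤ Σ |α_i||T f_i(y)| a.e. whenever all functions involved lie in its domain) with T(0) = 0 a.e., then |Tf(y)| ≤ ∫₀^∞ |T χ_{{f > t}}(y)| dt for a.e. y. -/

import Mathlib

open MeasureTheory Set
open scoped ENNReal

/-- If `f = Σ aₙ χ_{Bₙ}` is a nonnegative simple function with `aₙ > 0` and nested measurable
sets `B₁ ⊆ B₂ ⊆ ⋯ ⊆ B_N`, and `T` is a sublinear operator (on a class `D` containing `f` and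
the indicators of the `Bₙ`) with `T 0 = 0` a.e., then
`|Tf(y)| ≤ ∫₀^∞ |T χ_{{f > t}}(y)| dt` for a.e. `y`. -/
theorem stmt1 {α β : Type*} [MeasurableSpace α] [MeasurableSpace β]
    (μ : Measure α) (ν : Measure β) [SigmaFinite μ] [SigmaFinite ν]
    (D : Set (α → ℝ)) (T : (α → ℝ) → β → ℝ)
    (N : ℕ) (a : Fin N → ℝ) (ha : ∀ i, 0 < a i)
    (B : Fin N → Set α) (hBmeas : ∀ i, MeasurableSet (B i))
    (hBmono : ∀ i j : Fin N, i ≤ j → B i ⊆ B j)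
    (f : α → ℝ) (hf : f = fun x => ∑ i : Fin N, a i * (B i).indicator 1 x)
    (hfD : f ∈ D) (hBD : ∀ i, (fun x => (B i).indicator (1 : α → ℝ) x) ∈ D)
    (hzero : ∀ᵐ y ∂ν, T 0 y = 0)
    (hsub : ∀ (m : ℕ) (c : Fin m → ℝ) (g : Fin m → α → ℝ),
      (∀ i, g i ∈ D) → (fun x => ∑ i, c i * g i x) ∈ D →
      ∀ᵐ y ∂ν, |T (fun x => ∑ i, c i * g i x) y| ≤ ∑ i, |c i| * |T (g i) y|) :
    ∀ᵐ y ∂ν, ENNReal.ofReal |T f y| ≤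
      ∫⁻ t in Set.Ioi (0:ℝ),
        ENNReal.ofReal |T (fun x => ({x : α | t < f x}).indicator (1 : α → ℝ) x) y| := by
  classical
  set S : ℕ → ℝ := fun k => ∑ i ∈ Finset.univ.filter (fun i : Fin N => k ≤ (i:ℕ)), a i with hS
  have hS_nonneg : ∀ k, 0 ≤ S k := fun k => Finset.sum_nonneg fun i _ => (ha i).le
  have hS_step : ∀ k : Fin N, S (k:ℕ) = a k + S ((k:ℕ)+1) := by
    intro k
    have hins : Finset.univ.filter (fun i : Fin N => (k:ℕ) ≤ (i:ℕ))
        = insert k (Finset.univ.filter (fun i : Fin N => (k:ℕ)+1 ≤ (i:ℕ))) := by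
      ext i
      simp only [Finset.mem_filter, Finset.mem_univ, true_and, Finset.mem_insert, Fin.ext_iff]
      omega
    have hk : k ∉ Finset.univ.filter (fun i : Fin N => (k:ℕ)+1 ≤ (i:ℕ)) := by
      simp
    simp only [hS, hins, Finset.sum_insert hk]
  have hS_anti : Antitone S := by
    intro m n hmn
    apply Finset.sum_le_sum_of_subset_of_nonneg
    · intro i hi
      simp only [Finset.mem_filter, Finset.mem_univ, true_and] at hi ⊢
      omega
    · exact fun i _ _ => (ha i).le
  -- level sets
  have hlevel : ∀ (k : Fin N) (t : ℝ), t ∈ Ioo (S ((k:ℕ)+1)) (S (k:ℕ)) →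
      {x : α | t < f x} = B k := by
    intro k t ht
    ext x
    simp only [mem_setOf_eq, hf]
    constructor
    · intro hx
      by_contra hxB
      have h1 : (∑ i : Fin N, a i * (B i).indicator 1 x)
          = ∑ i ∈ Finset.univ.filter (fun i : Fin N => (k:ℕ)+1 ≤ (i:ℕ)),
              a i * (B i).indicator 1 x := by
        symm
        apply Finset.sum_subset (Finset.filter_subset _ _)
        intro i _ hi
        simp only [Finset.mem_filter, Finset.mem_univ, true_and, not_le] at hi
        have hik : i ≤ k := by rw [Fin.le_def]; omega
        have : x ∉ B i := fun h => hxB (hBmono i k hik h)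
        simp [this]
      have h2 : (∑ i ∈ Finset.univ.filter (fun i : Fin N => (k:ℕ)+1 ≤ (i:ℕ)),
              a i * (B i).indicator 1 x) ≤ S ((k:ℕ)+1) := by
        apply Finset.sum_le_sum
        intro i _
        by_cases hxi : x ∈ B i <;> simp [Set.indicator_apply, hxi, (ha i).le]
      have := ht.1
      linarith
    · intro hx
      have h1 : S (k:ℕ) = ∑ i ∈ Finset.univ.filter (fun i : Fin N => (k:ℕ) ≤ (i:ℕ)),
          a i * (B i).indicator 1 x := by
        apply Finset.sum_congr rfl
        intro i hi
        simp only [Finset.mem_filter, Finset.mem_univ, true_and] at hi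
        have hki : k ≤ i := by rw [Fin.le_def]; omega
        have : x ∈ B i := hBmono k i hki hx
        simp [Set.indicator_apply, this]
      have h2 : (∑ i ∈ Finset.univ.filter (fun i : Fin N => (k:ℕ) ≤ (i:ℕ)),
              a i * (B i).indicator 1 x) ≤ ∑ i : Fin N, a i * (B i).indicator 1 x := by
        apply Finset.sum_le_sum_of_subset_of_nonneg (Finset.filter_subset _ _)
        intro i _ _
        by_cases hxi : x ∈ B i <;> simp [Set.indicator_apply, hxi, (ha i).le]
      have := ht.2
      linarith
  have hae := hsub N a (fun i x => (B i).indicator 1 x) hBD (by rw [← hf]; exact hfD)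
  filter_upwards [hae] with y hy
  have key : ∀ k : Fin N,
      (∫⁻ t in Ioo (S ((k:ℕ)+1)) (S (k:ℕ)),
        ENNReal.ofReal |T (fun x => ({x : α | t < f x}).indicator (1 : α → ℝ) x) y|)
      = ENNReal.ofReal (a k) * ENNReal.ofReal |T (fun x => (B k).indicator (1 : α → ℝ) x) y| := by
    intro k
    rw [setLIntegral_congr_fun measurableSet_Ioo (fun t ht => by
      rw [hlevel k t ht])]
    rw [setLIntegral_const, Real.volume_Ioo]
    rw [mul_comm]
    congr 1
    rw [hS_step k]
    ring_nf
  have hsubset : (⋃ k : Fin N, Ioo (S ((k:ℕ)+1)) (S (k:ℕ))) ⊆ Ioi (0:ℝ) := by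
    intro t ht
    simp only [mem_iUnion] at ht
    obtain ⟨k, hk⟩ := ht
    exact lt_of_le_of_lt (hS_nonneg _) hk.1 |>.trans_le le_rfl |> fun h => h
  have hdisj : Pairwise (Function.onFun Disjoint
      (fun k : Fin N => Ioo (S ((k:ℕ)+1)) (S (k:ℕ)))) := by
    intro k j hkj
    rcases lt_or_gt_of_ne hkj with h | h
    · apply Set.disjoint_left.mpr
      intro t ht1 ht2
      have : S (j:ℕ) ≤ S ((k:ℕ)+1) := hS_anti (by exact_mod_cast h)
      exact absurd ht2.2 (not_lt.mpr (le_trans this ht1.1.le))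
    · apply Set.disjoint_left.mpr
      intro t ht1 ht2
      have : S (k:ℕ) ≤ S ((j:ℕ)+1) := hS_anti (by exact_mod_cast h)
      exact absurd ht1.2 (not_lt.mpr (le_trans this ht2.1.le))
  calc ENNReal.ofReal |T f y|
      ≤ ENNReal.ofReal (∑ i : Fin N, |a i| * |T (fun x => (B i).indicator (1:α→ℝ) x) y|) :=
        by rw [hf]; exact ENNReal.ofReal_le_ofReal hy
    _ = ∑ i : Fin N, ENNReal.ofReal (a i) *
          ENNReal.ofReal |T (fun x => (B i).indicator (1:α→ℝ) x) y| := by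
        rw [ENNReal.ofReal_sum_of_nonneg (fun i _ => by positivity)]
        refine Finset.sum_congr rfl fun i _ => ?_
        rw [abs_of_pos (ha i), ENNReal.ofReal_mul (ha i).le]
    _ = ∑ i : Fin N, ∫⁻ t in Ioo (S ((i:ℕ)+1)) (S (i:ℕ)),
          ENNReal.ofReal |T (fun x => ({x : α | t < f x}).indicator (1 : α → ℝ) x) y| := by
        exact Finset.sum_congr rfl fun i _ => (key i).symm
    _ = ∫⁻ t in ⋃ k : Fin N, Ioo (S ((k:ℕ)+1)) (S (k:ℕ)),
          ENNReal.ofReal |T (fun x => ({x : α | t < f x}).indicator (1 : α → ℝ) x) y| := by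
        rw [lintegral_iUnion (fun k => measurableSet_Ioo) hdisj, tsum_fintype]
    _ ≤ ∫⁻ t in Set.Ioi (0:ℝ),
          ENNReal.ofReal |T (fun x => ({x : α | t < f x}).indicator (1 : α → ℝ) x) y| :=
        lintegral_mono_set hsubset
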